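/- A symmetric tensor of even order m is a P_0 tensor if and only if it is positive semi-definite, i.e., A x^m >= 0 for all x in R^n. -/

import Mathlib

open Finset

noncomputable section

/-- The contraction `(A x^{m})_i` of an order-`m+1` tensor with `m` copies of `x`. -/
def contrT {m n : ℕ} (A : (Fin (m+1) → Fin n) → ℝ) (x : Fin n → ℝ) (i : Fin n) : ℝ :=
  ∑ f : Fin m → Fin n, A (Fin.cons i f) * ∏ k, x (f k)

/-- `A x^M` for an order-`M` tensor. -/
def polyT {M n : ℕ} (A : (Fin M → Fin n) → ℝ) (x : Fin n → ℝ) : ℝ :=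
  ∑ f : Fin M → Fin n, A f * ∏ k, x (f k)

/-- P tensor: for every nonzero `x`, `max_i x_i (A x^{m-1})_i > 0`. -/
def IsPTensor {m n : ℕ} (A : (Fin (m+1) → Fin n) → ℝ) : Prop :=
  ∀ x : Fin n → ℝ, x ≠ 0 → ∃ i : Fin n, 0 < x i * contrT A x i

/-- P₀ tensor: for every nonzero `x` there is `i` with `x i ≠ 0` and `x_i (A x^{m-1})_i ≥ 0`. -/
def IsP0Tensor {m n : ℕ} (A : (Fin (m+1) → Fin n) → ℝ) : Prop :=
  ∀ x : Fin n → ℝ, x ≠ 0 → ∃ i : Fin n, x i ≠ 0 ∧ 0 ≤ x i * contrT A x i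

def infNorm {n : ℕ} (x : Fin n → ℝ) : ℝ := ⨆ i, |x i|

/-- The operator `T_A(x) = ‖x‖₂^{2-m} A x^{m-1}` (order of the tensor is `m+1`). -/
def TA {m n : ℕ} (A : (Fin (m+1) → Fin n) → ℝ) (x : Fin n → ℝ) (i : Fin n) : ℝ :=
  if x = 0 then 0
  else (Real.sqrt (∑ j, x j ^ 2)) ^ ((2 : ℤ) - ((m : ℤ) + 1)) * contrT A x i

/-- `α(T_A) = min_{‖x‖_∞ = 1} max_i x_i (T_A(x))_i`. -/
def alphaT {m n : ℕ} (A : (Fin (m+1) → Fin n) → ℝ) : ℝ :=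
  sInf ((fun x => ⨆ i, x i * TA A x i) '' {x : Fin n → ℝ | infNorm x = 1})

/-- B tensor of order `m+1`. -/
def IsBTensor {m n : ℕ} (B : (Fin (m+1) → Fin n) → ℝ) : Prop :=
  ∀ i : Fin n, (0 < ∑ f : Fin m → Fin n, B (Fin.cons i f)) ∧
    ∀ g : Fin m → Fin n, g ≠ (fun _ => i) →
      B (Fin.cons i g) < (1 / (n : ℝ) ^ m) * ∑ f : Fin m → Fin n, B (Fin.cons i f)

/-- B₀ tensor of order `m+1`. -/
def IsB0Tensor {m n : ℕ} (B : (Fin (m+1) → Fin n) → ℝ) : Prop :=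
  ∀ i : Fin n, (0 ≤ ∑ f : Fin m → Fin n, B (Fin.cons i f)) ∧
    ∀ g : Fin m → Fin n, g ≠ (fun _ => i) →
      B (Fin.cons i g) ≤ (1 / (n : ℝ) ^ m) * ∑ f : Fin m → Fin n, B (Fin.cons i f)

lemma sum_cons_decomp {m n : ℕ} (F : (Fin (m+1) → Fin n) → ℝ) :
    ∑ f : Fin (m+1) → Fin n, F f = ∑ i : Fin n, ∑ g : Fin m → Fin n, F (Fin.cons i g) := by
  rw [← (Fin.consEquiv (fun _ => Fin n)).sum_comp F, Fintype.sum_prod_type]; rfl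

lemma prod_erase_zero {m : ℕ} (h : Fin (m+1) → ℝ) :
    ∏ j ∈ Finset.univ.erase 0, h j = ∏ k : Fin m, h k.succ := by
  have : (Finset.univ.erase (0 : Fin (m+1))) =
      Finset.univ.map ⟨Fin.succ, Fin.succ_injective m⟩ := by
    ext j
    simp only [Finset.mem_erase, Finset.mem_univ, and_true, Finset.mem_map,
      Function.Embedding.coeFn_mk]
    exact ⟨fun h => ⟨j.pred h, by simp, by simp⟩, by rintro ⟨a, -, rfl⟩; exact a.succ_ne_zero⟩
  rw [this, Finset.prod_map]; rfl

lemma prod_cons {m n : ℕ} (x : Fin n → ℝ) (i : Fin n) (g : Fin m → Fin n) :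
    ∏ k : Fin (m+1), x ((Fin.cons i g : Fin (m+1) → Fin n) k) = x i * ∏ k : Fin m, x (g k) := by
  rw [Fin.prod_univ_succ]
  simp

lemma polyT_eq_sum {m n : ℕ} (A : (Fin (m+1) → Fin n) → ℝ) (x : Fin n → ℝ) :
    polyT A x = ∑ i, x i * contrT A x i := by
  unfold polyT contrT
  rw [sum_cons_decomp]
  refine Finset.sum_congr rfl fun i _ => ?_
  rw [Finset.mul_sum]
  refine Finset.sum_congr rfl fun g _ => ?_
  rw [prod_cons x i g]
  ring

lemma polyT_smul {m n : ℕ} (A : (Fin (m+1) → Fin n) → ℝ) (t : ℝ) (x : Fin n → ℝ) :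
    polyT A (t • x) = t ^ (m+1) * polyT A x := by
  unfold polyT
  rw [Finset.mul_sum]
  refine Finset.sum_congr rfl fun f _ => ?_
  simp only [Pi.smul_apply, smul_eq_mul, Finset.prod_mul_distrib, Finset.prod_const,
    Finset.card_univ, Fintype.card_fin]
  ring

lemma polyT_zero {m n : ℕ} (A : (Fin (m+1) → Fin n) → ℝ) : polyT A (0 : Fin n → ℝ) = 0 := by
  unfold polyT
  refine Finset.sum_eq_zero fun f _ => ?_
  simp

-- key algebraic identity using symmetry
lemma slot_sum {m n : ℕ} (A : (Fin (m+1) → Fin n) → ℝ)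
    (hsym : ∀ (σ : Equiv.Perm (Fin (m+1))) (f : Fin (m+1) → Fin n), A (f ∘ σ) = A f)
    (x y : Fin n → ℝ) (k : Fin (m+1)) :
    ∑ f : Fin (m+1) → Fin n, A f * ((∏ j ∈ Finset.univ.erase k, x (f j)) * y (f k))
      = ∑ i, contrT A x i * y i := by
  have hswap : ∑ f : Fin (m+1) → Fin n, A f * ((∏ j ∈ Finset.univ.erase k, x (f j)) * y (f k))
      = ∑ f : Fin (m+1) → Fin n, A f * ((∏ j ∈ Finset.univ.erase 0, x (f j)) * y (f 0)) := by
    set σ : Equiv.Perm (Fin (m+1)) := Equiv.swap 0 k with hσ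
    set e : (Fin (m+1) → Fin n) ≃ (Fin (m+1) → Fin n) :=
      Equiv.arrowCongr σ (Equiv.refl (Fin n)) with he
    rw [← e.sum_comp (fun f => A f * ((∏ j ∈ Finset.univ.erase k, x (f j)) * y (f k)))]
    refine Finset.sum_congr rfl fun f _ => ?_
    have hef : e f = f ∘ σ := by
      funext j
      simp [he, hσ, Equiv.arrowCongr_apply, Equiv.symm_swap]
    rw [hef, hsym σ f]
    congr 1
    congr 1
    · -- product reindex
      have h1 := Finset.prod_image (s := Finset.univ.erase k) (g := ⇑σ)
        (f := fun j => x (f j)) (fun a _ b _ h => σ.injective h)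
      rw [Finset.image_erase σ.injective, Finset.image_univ_equiv] at h1
      simp only [hσ, Equiv.swap_apply_right] at h1
      simp only [Function.comp_apply, hσ]
      exact h1.symm
    · simp [hσ, Equiv.swap_apply_right, Function.comp]
  rw [hswap, sum_cons_decomp
    (fun f => A f * ((∏ j ∈ Finset.univ.erase 0, x (f j)) * y (f 0)))]
  refine Finset.sum_congr rfl fun i _ => ?_
  unfold contrT
  rw [Finset.sum_mul]
  refine Finset.sum_congr rfl fun g _ => ?_
  rw [prod_erase_zero (fun j => x ((Fin.cons i g : Fin (m+1) → Fin n) j))]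
  simp [Fin.cons_succ]
  ring

lemma polyT_hasStrictFDerivAt {m n : ℕ} (A : (Fin (m+1) → Fin n) → ℝ)
    (hsym : ∀ (σ : Equiv.Perm (Fin (m+1))) (f : Fin (m+1) → Fin n), A (f ∘ σ) = A f)
    (x : Fin n → ℝ) :
    HasStrictFDerivAt (polyT A)
      (((m : ℝ) + 1) • ∑ i, contrT A x i •
        (ContinuousLinearMap.proj i : (Fin n → ℝ) →L[ℝ] ℝ)) x := by
  have h1 : HasStrictFDerivAt (fun x : Fin n → ℝ => ∑ f : Fin (m+1) → Fin n, A f * ∏ k, x (f k))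
      (∑ f : Fin (m+1) → Fin n, A f • ∑ k : Fin (m+1),
        (∏ j ∈ Finset.univ.erase k, x (f j)) •
          (ContinuousLinearMap.proj (f k) : (Fin n → ℝ) →L[ℝ] ℝ)) x := by
    refine HasStrictFDerivAt.fun_sum fun f _ => ?_
    exact (HasStrictFDerivAt.finset_prod fun k _ =>
      (ContinuousLinearMap.proj (f k) :
        (Fin n → ℝ) →L[ℝ] ℝ).hasStrictFDerivAt).const_mul (A f)
  have heq : (∑ f : Fin (m+1) → Fin n, A f • ∑ k : Fin (m+1),
        (∏ j ∈ Finset.univ.erase k, x (f j)) •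
          (ContinuousLinearMap.proj (f k) : (Fin n → ℝ) →L[ℝ] ℝ))
      = ((m : ℝ) + 1) • ∑ i, contrT A x i •
          (ContinuousLinearMap.proj i : (Fin n → ℝ) →L[ℝ] ℝ) := by
    refine ContinuousLinearMap.ext fun y => ?_
    simp only [ContinuousLinearMap.sum_apply, ContinuousLinearMap.smul_apply,
      ContinuousLinearMap.proj_apply, smul_eq_mul]
    calc ∑ f : Fin (m+1) → Fin n, A f * ∑ k : Fin (m+1),
            (∏ j ∈ Finset.univ.erase k, x (f j)) * y (f k)
        = ∑ k : Fin (m+1), ∑ f : Fin (m+1) → Fin n,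
            A f * ((∏ j ∈ Finset.univ.erase k, x (f j)) * y (f k)) := by
          simp_rw [Finset.mul_sum]
          exact Finset.sum_comm
      _ = ∑ _k : Fin (m+1), ∑ i, contrT A x i * y i :=
          Finset.sum_congr rfl fun k _ => slot_sum A hsym x y k
      _ = ((m : ℝ) + 1) * ∑ i, contrT A x i * y i := by
          rw [Finset.sum_const, Finset.card_univ, Fintype.card_fin, nsmul_eq_mul]
          push_cast
          ring
  exact heq ▸ h1

lemma sq_sum_hasStrictFDerivAt {n : ℕ} (z : Fin n → ℝ) :
    HasStrictFDerivAt (fun x : Fin n → ℝ => ∑ j, x j ^ 2)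
      (∑ j, (2 * z j) • (ContinuousLinearMap.proj j : (Fin n → ℝ) →L[ℝ] ℝ)) z := by
  refine HasStrictFDerivAt.fun_sum fun j _ => ?_
  have hp : HasStrictFDerivAt (fun x : Fin n → ℝ => x j)
      (ContinuousLinearMap.proj j : (Fin n → ℝ) →L[ℝ] ℝ) z :=
    (ContinuousLinearMap.proj j : (Fin n → ℝ) →L[ℝ] ℝ).hasStrictFDerivAt
  have h2 := hp.fun_mul hp
  have hfun : (fun x : Fin n → ℝ => x j * x j) = fun x : Fin n → ℝ => x j ^ 2 := by
    funext x; ring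
  rw [hfun] at h2
  refine h2.congr_fderiv ?_
  refine ContinuousLinearMap.ext fun y => ?_
  simp only [ContinuousLinearMap.smul_apply, ContinuousLinearMap.add_apply,
    ContinuousLinearMap.proj_apply, smul_eq_mul]
  ring

theorem stmt9 (m n : ℕ) (hm : Even (m + 1))
    (A : (Fin (m+1) → Fin n) → ℝ)
    (hsym : ∀ (σ : Equiv.Perm (Fin (m+1))) (f : Fin (m+1) → Fin n), A (f ∘ σ) = A f) :
    IsP0Tensor A ↔ ∀ x : Fin n → ℝ, 0 ≤ polyT A x := by
  constructor
  · -- P₀ ⇒ PSD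
    intro hP0
    by_contra hneg
    push_neg at hneg
    obtain ⟨x₀, hx₀⟩ := hneg
    have hx0ne : x₀ ≠ 0 := by
      intro h
      rw [h, polyT_zero] at hx₀
      exact lt_irrefl 0 hx₀
    set g : (Fin n → ℝ) → ℝ := fun x => ∑ j, x j ^ 2 with hg
    have hgpos : 0 < g x₀ := by
      obtain ⟨j, hj⟩ := Function.ne_iff.mp hx0ne
      refine Finset.sum_pos' (fun j _ => sq_nonneg _) ⟨j, Finset.mem_univ j, ?_⟩
      have : x₀ j ≠ 0 := hj
      positivity
    have hsqpos : 0 < Real.sqrt (g x₀) := Real.sqrt_pos.mpr hgpos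
    set c : ℝ := (Real.sqrt (g x₀))⁻¹ with hc
    have hcpos : 0 < c := by positivity
    set x₁ : Fin n → ℝ := c • x₀ with hx₁
    set S : Set (Fin n → ℝ) := {x | g x = 1} with hS
    have hx₁S : x₁ ∈ S := by
      simp only [hS, Set.mem_setOf_eq, hg, hx₁, Pi.smul_apply, smul_eq_mul, mul_pow]
      rw [← Finset.mul_sum, hc, inv_pow]
      rw [Real.sq_sqrt hgpos.le]
      field_simp
      rfl
    have hx₁neg : polyT A x₁ < 0 := by
      rw [hx₁, polyT_smul]
      exact mul_neg_of_pos_of_neg (pow_pos hcpos _) hx₀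
    have hgcont : Continuous g := continuous_finset_sum _ fun j _ => (continuous_apply j).pow 2
    have hSc : IsCompact S := by
      refine Metric.isCompact_of_isClosed_isBounded ?_ ?_
      · exact (isClosed_singleton (x := (1:ℝ))).preimage hgcont
      · rw [isBounded_iff_forall_norm_le]
        refine ⟨1, fun x hx => ?_⟩
        rw [pi_norm_le_iff_of_nonneg zero_le_one]
        intro j
        have h1 : x j ^ 2 ≤ 1 := by
          have h2 := Finset.single_le_sum (f := fun j => x j ^ 2)
            (fun j _ => sq_nonneg _) (Finset.mem_univ j)
          have hx' : ∑ j, x j ^ 2 = 1 := hx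
          exact le_of_le_of_eq h2 hx'
        rw [Real.norm_eq_abs]
        nlinarith [abs_nonneg (x j), sq_abs (x j)]
    obtain ⟨z, hzS, hzmin⟩ := hSc.exists_isMinOn ⟨x₁, hx₁S⟩
      (fun x _ => (polyT_hasStrictFDerivAt A hsym x).continuousAt.continuousWithinAt)
    have hzneg : polyT A z < 0 := lt_of_le_of_lt (hzmin hx₁S) hx₁neg
    have hz1 : g z = 1 := hzS
    have hzne : z ≠ 0 := by
      intro h
      rw [h] at hz1
      simp [hg] at hz1
    have hextr : IsLocalExtrOn (polyT A) {x | g x = g z} z := by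
      rw [hz1]
      exact Or.inl hzmin.localize
    obtain ⟨α, β, hab, hsum⟩ := hextr.exists_multipliers_of_hasStrictFDerivAt_1d
      (sq_sum_hasStrictFDerivAt z) (polyT_hasStrictFDerivAt A hsym z)
    have heval : ∀ y : Fin n → ℝ,
        α * (∑ j, 2 * z j * y j) + β * (((m:ℝ)+1) * ∑ i, contrT A z i * y i) = 0 := by
      intro y
      have h := DFunLike.congr_fun hsum y
      simp only [ContinuousLinearMap.add_apply, ContinuousLinearMap.coe_smul',
        Pi.smul_apply, ContinuousLinearMap.sum_apply, ContinuousLinearMap.smul_apply,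
        ContinuousLinearMap.proj_apply, smul_eq_mul, ContinuousLinearMap.zero_apply,
        Finset.mul_sum, mul_assoc] at h ⊢
      convert h using 2
    have hco : ∀ i : Fin n, α * (2 * z i) + β * (((m:ℝ)+1) * contrT A z i) = 0 := by
      intro i
      have h := heval (Pi.single i 1)
      simp only [Pi.single_apply, mul_ite, mul_one, mul_zero, Finset.sum_ite_eq',
        Finset.mem_univ, if_true] at h
      exact h
    have hβ : β ≠ 0 := by
      rintro rfl
      have hα : α ≠ 0 := by
        intro h
        rw [h] at hab
        exact hab rfl
      apply hzne
      funext i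
      have h := hco i
      simp only [zero_mul, mul_zero, add_zero] at h
      have : z i = 0 := by
        rcases mul_eq_zero.mp h with h' | h'
        · exact absurd h' hα
        · linarith
      simpa using this
    have hfac : (0:ℝ) < (m:ℝ) + 1 := by positivity
    -- z i * contrT A z i = polyT A z * z i ^ 2
    have hkey : ∀ i : Fin n, z i * contrT A z i = polyT A z * z i ^ 2 := by
      have hsumzc : β * (((m:ℝ)+1) * polyT A z) = -(2 * α) := by
        have h := heval z
        have hpz : ∑ i, contrT A z i * z i = polyT A z := by
          rw [polyT_eq_sum]
          exact Finset.sum_congr rfl fun i _ => mul_comm _ _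
        rw [hpz] at h
        have hgz : ∑ j, 2 * z j * z j = 2 := by
          have : ∑ j, 2 * z j * z j = 2 * g z := by
            rw [hg, Finset.mul_sum]
            exact Finset.sum_congr rfl fun j _ => by ring
          rw [this, hz1]
          ring
        rw [hgz] at h
        linarith
      intro i
      have h := hco i
      have h2 : z i * (α * (2 * z i) + β * (((m:ℝ)+1) * contrT A z i)) = 0 := by
        rw [h]; ring
      have h3 : β * (((m:ℝ)+1) * (z i * contrT A z i)) = -(2 * α) * z i ^ 2 := by
        nlinarith [h2]
      rw [← hsumzc] at h3
      have hβm : β * ((m:ℝ)+1) ≠ 0 := mul_ne_zero hβ (ne_of_gt hfac)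
      have h4 : (β * ((m:ℝ)+1)) * (z i * contrT A z i)
          = (β * ((m:ℝ)+1)) * (polyT A z * z i ^ 2) := by ring_nf; ring_nf at h3; linarith
      exact mul_left_cancel₀ hβm h4
    obtain ⟨i, hzi, hge⟩ := hP0 z hzne
    have : polyT A z * z i ^ 2 < 0 := by
      have : (0:ℝ) < z i ^ 2 := by positivity
      nlinarith
    rw [← hkey i] at this
    linarith
  · -- PSD ⇒ P₀
    intro hpsd x hx
    by_contra hcon
    push_neg at hcon
    obtain ⟨i, hi⟩ := Function.ne_iff.mp hx
    have hlt : polyT A x < 0 := by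
      rw [polyT_eq_sum]
      have h := Finset.sum_lt_sum (s := Finset.univ)
        (f := fun i => x i * contrT A x i) (g := fun _ => (0:ℝ))
        (fun j _ => by
          rcases eq_or_ne (x j) 0 with h | h
          · simp [h]
          · exact (hcon j h).le)
        ⟨i, Finset.mem_univ i, hcon i hi⟩
      simpa using h
    linarith [hpsd x]
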